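/- Intermediate bound for the Markov-chain LP: let G have n vertices and maximum degree Δ > 1, let P be a local Markov chain with Gibbs stationary distribution μ satisfying ‖(P^t)_{x,·} - μ‖₁ ≤ c₁·n·(1-c₂/n)^t for all x ∈ S and t ≥ 0. Let f be supported on B with μ(f) = 0, let Λ ⊇ B with r = dist(B, Λ^c), and let ν ∈ LP_{Λ,MC}. Then for every integer t₁ ≥ 1, |ν(f)| ≤ 2·t₁·‖f‖_∞·8|B|·e^{v·t₁/n - r} + ‖f‖_∞·c₁·n·(1-c₂/n)^{t₁}, where v = e²(Δ-1). -/

import Mathlib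

namespace GibbsLP

variable {V : Type*} [Fintype V] [DecidableEq V]

/-- Spin configurations on the vertex set `V`; the two spin values `-1, +1` are
encoded by the two-element type `Bool`. -/
abbrev Config (V : Type*) := V → Bool

/-- The configuration `x` with the spin at site `i` flipped (denoted `xⁱ` in the paper). -/
def flip (x : Config V) (i : V) : Config V := Function.update x i (!x i)

/-- Discrete gradient `∇ᵢ f (x) = f(xⁱ) - f(x)`. -/
def grad (f : Config V → ℝ) (i : V) (x : Config V) : ℝ := f (flip x i) - f x

/-- `f` depends only on the spins in `Λ`, i.e. `supp f ⊆ Λ`. -/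
def SupportedOn (f : Config V → ℝ) (Λ : Set V) : Prop :=
  ∀ i ∉ Λ, ∀ x, f (flip x i) = f x

/-- The support `supp f = {i : ∇ᵢ f ≠ 0}` of an observable. -/
def sptSet (f : Config V → ℝ) : Set V := {i | ∃ x, f (flip x i) ≠ f x}

/-- Sup norm of an observable. -/
noncomputable def supNorm {α : Type*} (f : α → ℝ) : ℝ := ⨆ x, |f x|

/-- The Hamiltonian `H(x) = β ∑_{{i,j} ∈ E} h_{ij}(x_i, x_j)`; each unordered edge is
counted once (hence the factor `1/2` for the ordered double sum). -/
noncomputable def ham (G : SimpleGraph V) [DecidableRel G.Adj] (β : ℝ)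
    (h : V → V → Bool → Bool → ℝ) (x : Config V) : ℝ :=
  β * ((1 : ℝ) / 2 * ∑ i : V, ∑ j : V, if G.Adj i j then h i j (x i) (x j) else 0)

/-- The Gibbs distribution `μ(x) = e^{-H(x)} / Z`. -/
noncomputable def gibbs (H : Config V → ℝ) (x : Config V) : ℝ :=
  Real.exp (-H x) / ∑ y : Config V, Real.exp (-H y)

/-- `ν` is a probability distribution. -/
def IsDist {α : Type*} [Fintype α] (ν : α → ℝ) : Prop :=
  (∀ a, 0 ≤ ν a) ∧ ∑ a, ν a = 1

/-- Spin configurations on a subset `A ⊆ V`. -/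
abbrev SubConfig {V : Type*} (A : Finset V) := {i : V // i ∈ A} → Bool

/-- Restriction of a configuration to `A`. -/
def restrict (A : Finset V) (x : Config V) : SubConfig A := fun i => x i.1

/-- Extension of a configuration on `A` to all of `V` (by an arbitrary fixed value outside). -/
def extendC (A : Finset V) (y : SubConfig A) : Config V :=
  fun i => if h : i ∈ A then y ⟨i, h⟩ else true

/-- Flip the spin of `y : SubConfig A` at site `i` (identity if `i ∉ A`). -/
def flipAt (A : Finset V) (y : SubConfig A) (i : V) : SubConfig A :=
  fun j => if j.1 = i then !(y j) else y j

/-- External boundary `∂ᵉˣ Λ = {j ∉ Λ : ∃ i ∈ Λ, {i,j} ∈ E}`. -/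
def extBoundary (G : SimpleGraph V) [DecidableRel G.Adj] (Λ : Finset V) : Finset V :=
  Finset.univ.filter fun j => j ∉ Λ ∧ ∃ i ∈ Λ, G.Adj i j

/-- External boundary of a set of vertices (set version). -/
def extBoundarySet (G : SimpleGraph V) (A : Set V) : Set V :=
  {j | j ∉ A ∧ ∃ i ∈ A, G.Adj i j}

/-- `Λ̄ = Λ ∪ ∂ᵉˣ Λ`. -/
def closure (G : SimpleGraph V) [DecidableRel G.Adj] (Λ : Finset V) : Finset V :=
  Λ ∪ extBoundary G Λ

/-- `∇ᵢ H` evaluated on a configuration on `A` (well defined for `i ∈ Λ`, `A = Λ̄`, since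
then `∇ᵢ H` only depends on the spins in `Λ̄`). -/
noncomputable def gradH (A : Finset V) (H : Config V → ℝ) (i : V) (y : SubConfig A) : ℝ :=
  H (flip (extendC A y) i) - H (extendC A y)

/-- Expectation `ν(f)` of an observable `f` supported in `A` under a distribution `ν` on
`Σ^A`. -/
noncomputable def lexp {A : Finset V} (ν : SubConfig A → ℝ) (f : Config V → ℝ) : ℝ :=
  ∑ y : SubConfig A, ν y * f (extendC A y)

/-- The DLR linear program: distributions on `Σ^{Λ̄}` satisfying the local spin-flip
equations `ν(y) = ν(yⁱ) e^{∇ᵢH(y)}` for all `y` and `i ∈ Λ`. -/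
def LPdlr (G : SimpleGraph V) [DecidableRel G.Adj] (H : Config V → ℝ) (Λ : Finset V) :
    Set (SubConfig (closure G Λ) → ℝ) :=
  {ν | IsDist ν ∧ ∀ y, ∀ i ∈ Λ,
      ν y = ν (flipAt (closure G Λ) y i) * Real.exp (gradH (closure G Λ) H i y)}

/-- Values `ν(f)` over feasible points `ν` of the DLR linear program. -/
def dlrVals (G : SimpleGraph V) [DecidableRel G.Adj] (H : Config V → ℝ) (Λ : Finset V)
    (f : Config V → ℝ) : Set ℝ :=
  {t | ∃ ν ∈ LPdlr G H Λ, t = lexp ν f}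

/-- Marginal of a distribution `μ` on `Σ^V` on the sites in `A`. -/
noncomputable def marg (A : Finset V) (μ : Config V → ℝ) : SubConfig A → ℝ :=
  fun y => ∑ x : Config V, if restrict A x = y then μ x else 0

/-- The Hamiltonian truncated to `Λ` with boundary condition `η` on `∂ᵉˣ Λ`. -/
noncomputable def hamLoc (G : SimpleGraph V) [DecidableRel G.Adj] (β : ℝ)
    (h : V → V → Bool → Bool → ℝ) (Λ : Finset V)
    (η : SubConfig (extBoundary G Λ)) (x : SubConfig Λ) : ℝ :=
  β * ((1 : ℝ) / 2 * (∑ i ∈ Λ.attach, ∑ j ∈ Λ.attach,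
        if G.Adj i.1 j.1 then h i.1 j.1 (x i) (x j) else 0)
    + ∑ i ∈ Λ.attach, ∑ j ∈ (extBoundary G Λ).attach,
        if G.Adj i.1 j.1 then h i.1 j.1 (x i) (η j) else 0)

/-- The local Gibbs state `μ_Λ^η` on `Λ` with boundary condition `η`. -/
noncomputable def gibbsLoc (G : SimpleGraph V) [DecidableRel G.Adj] (β : ℝ)
    (h : V → V → Bool → Bool → ℝ) (Λ : Finset V)
    (η : SubConfig (extBoundary G Λ)) (x : SubConfig Λ) : ℝ :=
  Real.exp (-(hamLoc G β h Λ η x)) /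
    ∑ x' : SubConfig Λ, Real.exp (-(hamLoc G β h Λ η x'))

/-- Expectation `μ_Λ^η(f)` of an observable supported in `Λ` under the local Gibbs state. -/
noncomputable def gibbsLocExp (G : SimpleGraph V) [DecidableRel G.Adj] (β : ℝ)
    (h : V → V → Bool → Bool → ℝ) (Λ : Finset V)
    (η : SubConfig (extBoundary G Λ)) (f : Config V → ℝ) : ℝ :=
  ∑ x : SubConfig Λ, gibbsLoc G β h Λ η x * f (extendC Λ x)

/-- Combine `x ∈ Σ^Λ` and `η ∈ Σ^{∂ᵉˣΛ}` into a configuration `(x, η) ∈ Σ^{Λ̄}`. -/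
def glue (G : SimpleGraph V) [DecidableRel G.Adj] (Λ : Finset V)
    (x : SubConfig Λ) (η : SubConfig (extBoundary G Λ)) : SubConfig (closure G Λ) :=
  fun i => if h : i.1 ∈ Λ then x ⟨i.1, h⟩
    else η ⟨i.1, by
      have hi := i.2
      simp only [closure, Finset.mem_union] at hi
      tauto⟩

/-- A local (single-site, finite-range, bounded-rate) Markov chain on `Σ^V`. -/
structure IsLocalMC (G : SimpleGraph V) (P : Config V → Config V → ℝ) : Prop where
  nonneg : ∀ x x', 0 ≤ P x x'
  rowSum : ∀ x, ∑ x', P x x' = 1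
  /-- `P_{x,x'} = 0` if `x'` differs from `x` on more than one site. -/
  singleSite : ∀ x x', x' ≠ x → (∀ i, x' ≠ flip x i) → P x x' = 0
  /-- `P_{x,xⁱ}` only depends on the spins in the closed neighborhood of `i`. -/
  locality : ∀ i : V, ∀ x x' : Config V, x i = x' i →
      (∀ j, G.Adj i j → x j = x' j) → P x (flip x i) = P x' (flip x' i)
  /-- `P_{x,x'} ≤ 1/n` off the diagonal. -/
  bounded : ∀ x x', x ≠ x' → P x x' ≤ 1 / (Fintype.card V : ℝ)

/-- The Markov-chain linear program: distributions on `Σ^{Λ̄}` satisfying the stationarity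
equations `ν(Pg) = ν(g)` for all `g` supported on `Λ`. -/
def LPmc (G : SimpleGraph V) [DecidableRel G.Adj] (P : Config V → Config V → ℝ)
    (Λ : Finset V) : Set (SubConfig (closure G Λ) → ℝ) :=
  {ν | IsDist ν ∧ ∀ g : Config V → ℝ, SupportedOn g ↑Λ →
      lexp ν ((Matrix.of P).mulVec g) = lexp ν g}

/-- Values `ν(f)` over feasible points `ν` of the Markov-chain linear program. -/
def mcVals (G : SimpleGraph V) [DecidableRel G.Adj] (P : Config V → Config V → ℝ)
    (Λ : Finset V) (f : Config V → ℝ) : Set ℝ :=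
  {t | ∃ ν ∈ LPmc G P Λ, t = lexp ν f}

/-- The heat-bath dynamics: site `i` is flipped with probability
`c(i,x) = e^{-∇ᵢH(x)} / (1 + e^{-∇ᵢH(x)})`, each site being selected with probability `1/n`. -/
noncomputable def heatBath (H : Config V → ℝ) (x x' : Config V) : ℝ :=
  if x' = x then
    1 - (∑ i : V, Real.exp (-(grad H i x)) / (1 + Real.exp (-(grad H i x)))) /
      (Fintype.card V : ℝ)
  else
    ∑ i : V, if x' = flip x i then
      (Real.exp (-(grad H i x)) / (1 + Real.exp (-(grad H i x)))) / (Fintype.card V : ℝ)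
    else 0

/-- Marginal on `Σ^A` of a distribution on `Σ^B`, for `A ⊆ B`. -/
noncomputable def margTo {A B : Finset V} (hAB : A ⊆ B) (ν : SubConfig B → ℝ) :
    SubConfig A → ℝ :=
  fun z => ∑ y : SubConfig B,
    if (fun i : {i : V // i ∈ A} => y ⟨i.1, hAB i.2⟩) = z then ν y else 0

theorem closure_mono (G : SimpleGraph V) [DecidableRel G.Adj] {Λ Λ' : Finset V}
    (hs : Λ ⊆ Λ') : closure G Λ ⊆ closure G Λ' := by
  intro j hj
  simp only [closure, Finset.mem_union, extBoundary, Finset.mem_filter, Finset.mem_univ,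
    true_and] at hj ⊢
  by_cases hjΛ' : j ∈ Λ'
  · exact Or.inl hjΛ'
  · rcases hj with hj | ⟨hjn, i, hiΛ, hadj⟩
    · exact absurd (hs hj) hjΛ'
    · exact Or.inr ⟨hjΛ', i, hs hiΛ, hadj⟩

/-! ### Auxiliary lemmas for `LPmc_intermediate_bound` -/

section AuxLemmas

lemma flip_apply (x : Config V) (i k : V) : flip x i k = if k = i then !x i else x k :=
  Function.update_apply x i (!x i) k

lemma flip_self_apply (x : Config V) (i : V) : flip x i i = !x i := by simp [flip_apply]

lemma flip_other (x : Config V) {i k : V} (h : k ≠ i) : flip x i k = x k := by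
  simp [flip_apply, h]

lemma flip_flip (x : Config V) (i : V) : flip (flip x i) i = x := by
  funext k
  by_cases h : k = i
  · subst h; simp [flip_apply]
  · simp [flip_apply, h]

lemma flip_comm (x : Config V) {i j : V} (h : i ≠ j) :
    flip (flip x j) i = flip (flip x i) j := by
  have h' : j ≠ i := Ne.symm h
  funext k
  by_cases hki : k = i
  · subst hki
    simp [flip_apply, h, h']
  · by_cases hkj : k = j
    · subst hkj
      simp [flip_apply, hki, h, h']
    · simp [flip_apply, hki, hkj]

lemma flip_ne (x : Config V) (i : V) : flip x i ≠ x := by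
  intro hcon
  have := congrFun hcon i
  simp [flip_apply] at this

lemma flip_right_injective (x : Config V) {i i' : V} (h : flip x i = flip x i') : i = i' := by
  by_contra hne
  have h1 := congrFun h i
  rw [flip_apply, flip_apply, if_pos rfl, if_neg hne] at h1
  simp at h1

/-- Sum over configurations supported on single flips of `x`. -/
lemma sum_eq_sum_flips (x : Config V) (F : Config V → ℝ) (h0 : F x = 0)
    (hz : ∀ x', x' ≠ x → (∀ i, x' ≠ flip x i) → F x' = 0) :
    ∑ x' : Config V, F x' = ∑ i : V, F (flip x i) := by
  classical
  have hinj : ∀ i ∈ (Finset.univ : Finset V), ∀ i' ∈ (Finset.univ : Finset V),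
      flip x i = flip x i' → i = i' := fun i _ i' _ h => flip_right_injective x h
  rw [← Finset.sum_image hinj]
  refine (Finset.sum_subset (Finset.subset_univ _) ?_).symm
  intro x' _ hx'
  by_cases hxx : x' = x
  · rw [hxx]; exact h0
  · exact hz x' hxx fun i he => hx' (Finset.mem_image.mpr ⟨i, Finset.mem_univ i, he.symm⟩)

lemma mulVec_apply (P : Config V → Config V → ℝ) (g : Config V → ℝ) (x : Config V) :
    (Matrix.of P).mulVec g x = ∑ x' : Config V, P x x' * g x' := rfl

lemma mulVec_expand {G : SimpleGraph V} {P : Config V → Config V → ℝ} (hP : IsLocalMC G P)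
    (g : Config V → ℝ) (x : Config V) :
    (Matrix.of P).mulVec g x = g x + ∑ i : V, P x (flip x i) * (g (flip x i) - g x) := by
  rw [mulVec_apply]
  have h2 : ∀ x' : Config V, P x x' * g x' = P x x' * g x + P x x' * (g x' - g x) :=
    fun x' => by ring
  simp_rw [h2]
  rw [Finset.sum_add_distrib, ← Finset.sum_mul, hP.rowSum, one_mul]
  congr 1
  exact sum_eq_sum_flips x (fun x' => P x x' * (g x' - g x)) (by simp)
    (fun x' hne hnf => by
      have hz : P x x' = 0 := hP.singleSite x x' hne hnf
      simp [hz])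

lemma sum_rates_le_one {G : SimpleGraph V} {P : Config V → Config V → ℝ}
    (hP : IsLocalMC G P) (y : Config V) :
    ∑ i : V, P y (flip y i) ≤ 1 := by
  classical
  have hinj : ∀ i ∈ (Finset.univ : Finset V), ∀ i' ∈ (Finset.univ : Finset V),
      flip y i = flip y i' → i = i' := fun i _ i' _ h => flip_right_injective y h
  have heq : ∑ i : V, P y (flip y i) = ∑ x' ∈ Finset.univ.image (flip y), P y x' :=
    (Finset.sum_image hinj).symm
  rw [heq, ← hP.rowSum y]
  exact Finset.sum_le_sum_of_subset_of_nonneg (Finset.subset_univ _)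
    fun x' _ _ => hP.nonneg y x'

/-- The core single-step propagation bound for the discrete gradient of a local chain. -/
lemma grad_mulVec_le {G : SimpleGraph V} [DecidableRel G.Adj] {P : Config V → Config V → ℝ}
    (hP : IsLocalMC G P) (g : Config V → ℝ) (A : V → ℝ)
    (hA : ∀ k z, |grad g k z| ≤ A k) (j : V) (x : Config V) :
    |grad ((Matrix.of P).mulVec g) j x| ≤
      (1 + 1 / (Fintype.card V : ℝ)) * A j
        + (1 / (Fintype.card V : ℝ)) * ∑ i ∈ G.neighborFinset j, A i := by
  classical
  set n : ℝ := (Fintype.card V : ℝ) with hn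
  have hn1 : (1 : ℝ) ≤ n := by
    have hcard : 0 < Fintype.card V := Fintype.card_pos_iff.mpr ⟨j⟩
    rw [hn]
    exact_mod_cast hcard
  set y : Config V := flip x j with hy
  set c : V → Config V → ℝ := fun i z => P z (flip z i) with hc
  have hcb : ∀ z i, c i z ≤ 1 / n := fun z i => hP.bounded z (flip z i) (flip_ne z i).symm
  have hc0 : ∀ z i, 0 ≤ c i z := fun z i => hP.nonneg _ _
  have hfar : ∀ i, i ≠ j → ¬G.Adj j i → c i y = c i x := by
    intro i hij hadj
    refine (hP.locality i x y (flip_other x hij).symm ?_).symm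
    intro k hk
    have hkj : k ≠ j := fun hkk => hadj (G.adj_symm (hkk ▸ hk))
    exact (flip_other x hkj).symm
  have expand1 : grad ((Matrix.of P).mulVec g) j x
      = (g y - g x) + ∑ i : V,
          (c i y * (g (flip y i) - g y) - c i x * (g (flip x i) - g x)) := by
    rw [grad, mulVec_expand hP g (flip x j), mulVec_expand hP g x, ← hy,
      Finset.sum_sub_distrib]
    simp only [hc]
    ring
  have split : ∀ h : V → ℝ, ∑ i : V, h i = (∑ i ∈ Finset.univ.erase j, h i) + h j :=
    fun h => (Finset.sum_erase_add _ _ (Finset.mem_univ j)).symm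
  have hterm : ∀ i ∈ Finset.univ.erase j,
      c i y * (g (flip y i) - g y) - c i x * (g (flip x i) - g x)
        = c i y * grad g j (flip x i) - c i y * (g y - g x)
          + (c i y - c i x) * grad g i x := by
    intro i hi
    have hij : i ≠ j := Finset.ne_of_mem_erase hi
    have h1 : flip y i = flip (flip x i) j := flip_comm x hij
    rw [h1, grad, grad]
    ring
  have key : grad ((Matrix.of P).mulVec g) j x
      = (1 - c j y - c j x - ∑ i ∈ Finset.univ.erase j, c i y) * (g y - g x)
        + ∑ i ∈ Finset.univ.erase j, c i y * grad g j (flip x i)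
        + ∑ i ∈ Finset.univ.erase j, (c i y - c i x) * grad g i x := by
    rw [expand1, split (fun i => c i y * (g (flip y i) - g y) - c i x * (g (flip x i) - g x)),
      Finset.sum_congr rfl hterm]
    have hyj : flip y j = x := flip_flip x j
    rw [hyj]
    simp only [Finset.sum_add_distrib, Finset.sum_sub_distrib, ← Finset.sum_mul]
    ring
  have hthird : ∑ i ∈ Finset.univ.erase j, (c i y - c i x) * grad g i x
      = ∑ i ∈ G.neighborFinset j, (c i y - c i x) * grad g i x := by
    refine (Finset.sum_subset ?_ ?_).symm
    · intro i hi
      rw [SimpleGraph.mem_neighborFinset] at hi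
      exact Finset.mem_erase.mpr ⟨(G.ne_of_adj hi).symm, Finset.mem_univ i⟩
    · intro i hi hni
      have hij : i ≠ j := Finset.ne_of_mem_erase hi
      have hadj : ¬G.Adj j i := fun hadj => hni ((G.mem_neighborFinset j i).mpr hadj)
      rw [hfar i hij hadj, sub_self, zero_mul]
  set s : ℝ := ∑ i ∈ Finset.univ.erase j, c i y with hs
  have hs0 : 0 ≤ s := Finset.sum_nonneg fun i _ => hc0 y i
  have hs1 : s + c j y ≤ 1 := by
    have := sum_rates_le_one hP y
    rw [split (fun i => c i y)] at this
    exact this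
  have hAj0 : 0 ≤ A j := le_trans (abs_nonneg _) (hA j x)
  have habs1 : |1 - c j y - c j x - s| + s ≤ 1 + 1 / n := by
    have h1 : 0 ≤ c j y := hc0 y j
    have h2 : 0 ≤ c j x := hc0 x j
    have h3 : c j x ≤ 1 / n := hcb x j
    have h4 : c j y ≤ 1 / n := hcb y j
    rcases abs_cases (1 - c j y - c j x - s) with ⟨he, _⟩ | ⟨he, _⟩ <;> rw [he] <;> linarith
  have hD : |g y - g x| ≤ A j := hA j x
  rw [key, hthird]
  calc |(1 - c j y - c j x - s) * (g y - g x)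
        + ∑ i ∈ Finset.univ.erase j, c i y * grad g j (flip x i)
        + ∑ i ∈ G.neighborFinset j, (c i y - c i x) * grad g i x|
      ≤ |(1 - c j y - c j x - s) * (g y - g x)|
        + |∑ i ∈ Finset.univ.erase j, c i y * grad g j (flip x i)|
        + |∑ i ∈ G.neighborFinset j, (c i y - c i x) * grad g i x| := by
        exact (abs_add_le _ _).trans (add_le_add_left (abs_add_le _ _) _)
    _ ≤ |1 - c j y - c j x - s| * A j
        + ∑ i ∈ Finset.univ.erase j, c i y * A j
        + ∑ i ∈ G.neighborFinset j, (1 / n) * A i := by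
        refine add_le_add (add_le_add ?_ ?_) ?_
        · rw [abs_mul]
          exact mul_le_mul_of_nonneg_left hD (abs_nonneg _)
        · refine (Finset.abs_sum_le_sum_abs _ _).trans (Finset.sum_le_sum ?_)
          intro i _
          rw [abs_mul, abs_of_nonneg (hc0 y i)]
          exact mul_le_mul_of_nonneg_left (hA j (flip x i)) (hc0 y i)
        · refine (Finset.abs_sum_le_sum_abs _ _).trans (Finset.sum_le_sum ?_)
          intro i _
          rw [abs_mul]
          refine mul_le_mul (abs_le.mpr ⟨?_, ?_⟩) (hA i x) (abs_nonneg _) ?_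
          · have := hc0 x i; have := hcb y i; linarith [hc0 y i, hcb x i]
          · linarith [hc0 x i, hcb y i]
          · rw [hn]; positivity
    _ ≤ (1 + 1 / n) * A j + (1 / n) * ∑ i ∈ G.neighborFinset j, A i := by
        rw [← Finset.sum_mul, Finset.mul_sum]
        have : |1 - c j y - c j x - s| * A j + s * A j
            = (|1 - c j y - c j x - s| + s) * A j := by ring
        rw [this]
        exact add_le_add_left (mul_le_mul_of_nonneg_right habs1 hAj0) _

/-- Comparison sequence dominating gradient propagation. -/
noncomputable def aseq (G : SimpleGraph V) [DecidableRel G.Adj] (B : Finset V) (M : ℝ) :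
    ℕ → V → ℝ
  | 0 => fun j => if j ∈ B then M else 0
  | (t + 1) => fun j =>
      (1 + 1 / (Fintype.card V : ℝ)) * aseq G B M t j
        + (1 / (Fintype.card V : ℝ)) * ∑ i ∈ G.neighborFinset j, aseq G B M t i

lemma aseq_nonneg (G : SimpleGraph V) [DecidableRel G.Adj] (B : Finset V) {M : ℝ}
    (hM : 0 ≤ M) : ∀ t j, 0 ≤ aseq G B M t j := by
  intro t
  induction t with
  | zero => intro j; simp only [aseq]; split <;> simp [hM]
  | succ t ih =>
    intro j
    simp only [aseq]
    have h1 : (0:ℝ) ≤ 1 + 1 / (Fintype.card V : ℝ) := by positivity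
    have h2 : (0:ℝ) ≤ 1 / (Fintype.card V : ℝ) := by positivity
    exact add_nonneg (mul_nonneg h1 (ih j))
      (mul_nonneg h2 (Finset.sum_nonneg fun i _ => ih i))

lemma grad_pow_le {G : SimpleGraph V} [DecidableRel G.Adj] {P : Config V → Config V → ℝ}
    (hP : IsLocalMC G P) (B : Finset V) (M : ℝ) (f : Config V → ℝ)
    (h0 : ∀ j z, |grad f j z| ≤ aseq G B M 0 j) :
    ∀ t j z, |grad ((Matrix.of P ^ t).mulVec f) j z| ≤ aseq G B M t j := by
  intro t
  induction t with
  | zero =>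
    intro j z
    simpa [Matrix.one_mulVec] using h0 j z
  | succ t ih =>
    intro j z
    have hrw : (Matrix.of P ^ (t + 1)).mulVec f
        = (Matrix.of P).mulVec ((Matrix.of P ^ t).mulVec f) := by
      rw [pow_succ', Matrix.mulVec_mulVec]
    rw [hrw]
    have := grad_mulVec_le hP ((Matrix.of P ^ t).mulVec f) (aseq G B M t)
      (fun k w => ih k w) j z
    simpa [aseq] using this

/-- The set of vertices at distance at least `m` from `B`. -/
noncomputable def Fdist (G : SimpleGraph V) (B : Finset V) (m : ℕ) : Finset V := by
  classical
  exact Finset.univ.filter fun j => ∀ i ∈ B, (m : ℕ∞) ≤ G.edist i j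

lemma mem_Fdist {G : SimpleGraph V} {B : Finset V} {m : ℕ} {j : V} :
    j ∈ Fdist G B m ↔ ∀ i ∈ B, (m : ℕ∞) ≤ G.edist i j := by
  simp [Fdist]

lemma mem_Fdist_zero (G : SimpleGraph V) (B : Finset V) (j : V) : j ∈ Fdist G B 0 := by
  rw [mem_Fdist]
  intro i _
  simp

lemma not_mem_B_of_Fdist {G : SimpleGraph V} {B : Finset V} {m : ℕ} {j : V}
    (hj : j ∈ Fdist G B (m + 1)) : j ∉ B := by
  intro hjB
  have := mem_Fdist.mp hj j hjB
  rw [SimpleGraph.edist_self] at this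
  simp at this

lemma Fdist_adj {G : SimpleGraph V} {B : Finset V} {m : ℕ} {i j : V}
    (hj : j ∈ Fdist G B (m + 1)) (hadj : G.Adj i j) : i ∈ Fdist G B m := by
  rw [mem_Fdist]
  intro b hb
  have h1 : ((m + 1 : ℕ) : ℕ∞) ≤ G.edist b j := mem_Fdist.mp hj b hb
  have h2 : G.edist b j ≤ G.edist b i + 1 := by
    have ht : G.edist b j ≤ G.edist b i + G.edist i j := SimpleGraph.edist_triangle
    rwa [SimpleGraph.edist_eq_one_iff_adj.mpr hadj] at ht
  rcases eq_or_ne (G.edist b i) ⊤ with htop | htop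
  · rw [htop]; exact le_top
  · lift G.edist b i to ℕ using htop with k hk
    have h3 : ((m + 1 : ℕ) : ℕ∞) ≤ ((k + 1 : ℕ) : ℕ∞) := by
      refine le_trans h1 (le_trans h2 (le_of_eq ?_))
      push_cast
      rfl
    have h4 : m + 1 ≤ k + 1 := by exact_mod_cast h3
    have h5 : m ≤ k := Nat.le_of_succ_le_succ h4
    exact_mod_cast h5

/-- The binomial-type comparison quantity. -/
noncomputable def Useq (a l : ℝ) (t m : ℕ) : ℝ :=
  ∑ k ∈ Finset.Ico m (t + 1), (t.choose k : ℝ) * a ^ (t - k) * l ^ k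

lemma Useq_nonneg {a l : ℝ} (ha : 0 ≤ a) (hl : 0 ≤ l) (t m : ℕ) : 0 ≤ Useq a l t m :=
  Finset.sum_nonneg fun k _ => by positivity

lemma Useq_zero_right (a l : ℝ) (t : ℕ) : Useq a l t 0 = (l + a) ^ t := by
  rw [Useq, ← Finset.range_eq_Ico, add_pow]
  exact Finset.sum_congr rfl fun k _ => by ring

lemma Useq_rec {a l : ℝ} (ha : 0 ≤ a) (hl : 0 ≤ l) (t m : ℕ) :
    a * Useq a l t m + l * Useq a l t (m - 1) ≤ Useq a l (t + 1) m := by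
  cases m with
  | zero =>
    rw [Nat.zero_sub, Useq_zero_right, Useq_zero_right, pow_succ]
    exact le_of_eq (by ring)
  | succ m' =>
    apply le_of_eq
    have e1 : Useq a l (t + 1) (m' + 1)
        = ∑ k ∈ Finset.Ico m' (t + 1),
            ((t.choose k : ℝ) + (t.choose (k + 1) : ℝ)) * a ^ (t - k) * l ^ (k + 1) := by
      rw [Useq, ← Finset.map_add_right_Ico m' (t + 1) 1, Finset.sum_map]
      refine Finset.sum_congr rfl fun k hk => ?_
      simp only [addRightEmbedding_apply]
      rw [Nat.choose_succ_succ, Nat.succ_sub_succ]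
      push_cast
      ring
    have e2 : l * Useq a l t m'
        = ∑ k ∈ Finset.Ico m' (t + 1), (t.choose k : ℝ) * a ^ (t - k) * l ^ (k + 1) := by
      rw [Useq, Finset.mul_sum]
      exact Finset.sum_congr rfl fun k _ => by ring
    have e3 : a * Useq a l t (m' + 1)
        = ∑ k ∈ Finset.Ico m' (t + 1), (t.choose (k + 1) : ℝ) * a ^ (t - k) * l ^ (k + 1) := by
      rw [Useq, Finset.mul_sum, ← Finset.map_add_right_Ico m' t 1, Finset.sum_map]
      rcases le_or_gt m' t with hmt | hmt
      · rw [Finset.sum_Ico_succ_top hmt]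
        simp only [addRightEmbedding_apply, Nat.choose_succ_self, Nat.cast_zero, zero_mul,
          add_zero]
        refine Finset.sum_congr rfl fun k hk => ?_
        have hk' : k < t := (Finset.mem_Ico.mp hk).2
        have hsub : t - k = (t - (k + 1)) + 1 := by omega
        rw [hsub, pow_succ]
        ring
      · rw [Finset.Ico_eq_empty (by omega), Finset.Ico_eq_empty (by omega)]
        simp
    have hm : m' + 1 - 1 = m' := rfl
    rw [hm, e1, e2, e3, ← Finset.sum_add_distrib]
    exact Finset.sum_congr rfl fun k _ => by ring

lemma Useq_le {a l : ℝ} (ha : 1 ≤ a) (hl : 0 ≤ l) (t m : ℕ) :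
    Useq a l t m ≤ Real.exp ((t : ℝ) * (a - 1) + Real.exp 1 * ((t : ℝ) * l) - (m : ℝ)) := by
  have ha0 : (0 : ℝ) ≤ a := by linarith
  have step1 : Useq a l t m
      ≤ a ^ t * ∑ k ∈ Finset.Ico m (t + 1), ((t : ℝ) * l) ^ k / (k.factorial : ℝ) := by
    rw [Finset.mul_sum, Useq]
    refine Finset.sum_le_sum fun k _ => ?_
    have h1 : a ^ (t - k) ≤ a ^ t := pow_le_pow_right₀ ha (Nat.sub_le t k)
    have h2 : (t.choose k : ℝ) ≤ (t : ℝ) ^ k / (k.factorial : ℝ) := Nat.choose_le_pow_div k t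
    have hfac : (0 : ℝ) < (k.factorial : ℝ) := by exact_mod_cast k.factorial_pos
    calc (t.choose k : ℝ) * a ^ (t - k) * l ^ k
        ≤ ((t : ℝ) ^ k / (k.factorial : ℝ)) * a ^ t * l ^ k := by
          refine mul_le_mul_of_nonneg_right ?_ (pow_nonneg hl k)
          exact mul_le_mul h2 h1 (pow_nonneg ha0 _) (by positivity)
      _ = a ^ t * (((t : ℝ) * l) ^ k / (k.factorial : ℝ)) := by rw [mul_pow]; ring
  have step2 : a ^ t ≤ Real.exp ((t : ℝ) * (a - 1)) := by
    calc a ^ t ≤ Real.exp (a - 1) ^ t :=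
          pow_le_pow_left₀ ha0 (by linarith [Real.add_one_le_exp (a - 1)]) t
      _ = Real.exp ((t : ℝ) * (a - 1)) := by rw [← Real.exp_nat_mul]
  have step3 : ∑ k ∈ Finset.Ico m (t + 1), ((t : ℝ) * l) ^ k / (k.factorial : ℝ)
      ≤ Real.exp (-(m : ℝ)) * Real.exp (Real.exp 1 * ((t : ℝ) * l)) := by
    have h1 : ∑ k ∈ Finset.Ico m (t + 1), ((t : ℝ) * l) ^ k / (k.factorial : ℝ)
        ≤ ∑ k ∈ Finset.Ico m (t + 1),
            Real.exp (-(m : ℝ)) * ((Real.exp 1 * ((t : ℝ) * l)) ^ k / (k.factorial : ℝ)) := by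
      refine Finset.sum_le_sum fun k hk => ?_
      have hkm : (m : ℝ) ≤ (k : ℝ) := by exact_mod_cast (Finset.mem_Ico.mp hk).1
      have he1 : (1 : ℝ) ≤ Real.exp (-(m : ℝ)) * Real.exp 1 ^ k := by
        rw [← Real.exp_nat_mul, ← Real.exp_add]
        refine Real.one_le_exp ?_
        push_cast
        linarith
      have hnn : (0 : ℝ) ≤ ((t : ℝ) * l) ^ k / (k.factorial : ℝ) := by positivity
      calc ((t : ℝ) * l) ^ k / (k.factorial : ℝ)
          = 1 * (((t : ℝ) * l) ^ k / (k.factorial : ℝ)) := (one_mul _).symm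
        _ ≤ (Real.exp (-(m : ℝ)) * Real.exp 1 ^ k) * (((t : ℝ) * l) ^ k / (k.factorial : ℝ)) :=
            mul_le_mul_of_nonneg_right he1 hnn
        _ = Real.exp (-(m : ℝ)) * ((Real.exp 1 * ((t : ℝ) * l)) ^ k / (k.factorial : ℝ)) := by
            rw [mul_pow]; ring
    have h2 : ∑ k ∈ Finset.Ico m (t + 1),
        (Real.exp 1 * ((t : ℝ) * l)) ^ k / (k.factorial : ℝ)
        ≤ Real.exp (Real.exp 1 * ((t : ℝ) * l)) := by
      have hsub : Finset.Ico m (t + 1) ⊆ Finset.range (t + 1) := by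
        intro k hk
        rw [Finset.mem_range]
        exact (Finset.mem_Ico.mp hk).2
      refine le_trans (Finset.sum_le_sum_of_subset_of_nonneg hsub fun k _ _ => by positivity) ?_
      exact Real.sum_le_exp_of_nonneg (by positivity) (t + 1)
    calc ∑ k ∈ Finset.Ico m (t + 1), ((t : ℝ) * l) ^ k / (k.factorial : ℝ)
        ≤ ∑ k ∈ Finset.Ico m (t + 1),
            Real.exp (-(m : ℝ)) * ((Real.exp 1 * ((t : ℝ) * l)) ^ k / (k.factorial : ℝ)) := h1
      _ = Real.exp (-(m : ℝ)) * ∑ k ∈ Finset.Ico m (t + 1),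
            (Real.exp 1 * ((t : ℝ) * l)) ^ k / (k.factorial : ℝ) := by rw [Finset.mul_sum]
      _ ≤ Real.exp (-(m : ℝ)) * Real.exp (Real.exp 1 * ((t : ℝ) * l)) :=
          mul_le_mul_of_nonneg_left h2 (Real.exp_pos _).le
  calc Useq a l t m
      ≤ a ^ t * ∑ k ∈ Finset.Ico m (t + 1), ((t : ℝ) * l) ^ k / (k.factorial : ℝ) := step1
    _ ≤ Real.exp ((t : ℝ) * (a - 1))
        * (Real.exp (-(m : ℝ)) * Real.exp (Real.exp 1 * ((t : ℝ) * l))) := by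
        refine mul_le_mul step2 step3 (Finset.sum_nonneg fun k _ => by positivity)
          (Real.exp_pos _).le
    _ = Real.exp ((t : ℝ) * (a - 1) + Real.exp 1 * ((t : ℝ) * l) - (m : ℝ)) := by
        rw [← Real.exp_add, ← Real.exp_add]
        congr 1
        ring

lemma sum_aseq_Fdist_le (G : SimpleGraph V) [DecidableRel G.Adj] (B : Finset V) {M : ℝ}
    (hM : 0 ≤ M) {Δ : ℕ} (hdeg : ∀ v : V, G.degree v ≤ Δ) :
    ∀ t m, ∑ j ∈ Fdist G B m, aseq G B M t j
      ≤ M * (B.card : ℝ) *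
        Useq (1 + 1 / (Fintype.card V : ℝ)) ((Δ : ℝ) / (Fintype.card V : ℝ)) t m := by
  classical
  have hn0 : (0 : ℝ) ≤ (Fintype.card V : ℝ) := Nat.cast_nonneg _
  have ha0 : (0 : ℝ) ≤ 1 + 1 / (Fintype.card V : ℝ) := by positivity
  have hl0 : (0 : ℝ) ≤ (Δ : ℝ) / (Fintype.card V : ℝ) := by positivity
  intro t
  induction t with
  | zero =>
    intro m
    cases m with
    | zero =>
      have hU : Useq (1 + 1 / (Fintype.card V : ℝ)) ((Δ : ℝ) / (Fintype.card V : ℝ)) 0 0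
          = 1 := by simp [Useq]
      rw [hU, mul_one]
      calc ∑ j ∈ Fdist G B 0, aseq G B M 0 j
          ≤ ∑ j : V, aseq G B M 0 j :=
            Finset.sum_le_sum_of_subset_of_nonneg (Finset.subset_univ _)
              fun j _ _ => aseq_nonneg G B hM 0 j
        _ = ∑ j ∈ B, M := by
            simp only [aseq]
            rw [Finset.sum_ite_mem, Finset.univ_inter]
        _ = M * (B.card : ℝ) := by rw [Finset.sum_const, nsmul_eq_mul, mul_comm]
    | succ m' =>
      have h0 : ∑ j ∈ Fdist G B (m' + 1), aseq G B M 0 j = 0 := by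
        refine Finset.sum_eq_zero fun j hj => ?_
        simp only [aseq]
        rw [if_neg (not_mem_B_of_Fdist hj)]
      rw [h0]
      exact mul_nonneg (mul_nonneg hM (Nat.cast_nonneg _)) (Useq_nonneg ha0 hl0 _ _)
  | succ t ih =>
    intro m
    have hexp : ∑ j ∈ Fdist G B m, aseq G B M (t + 1) j
        = (1 + 1 / (Fintype.card V : ℝ)) * ∑ j ∈ Fdist G B m, aseq G B M t j
          + (1 / (Fintype.card V : ℝ))
            * ∑ j ∈ Fdist G B m, ∑ i ∈ G.neighborFinset j, aseq G B M t i := by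
      simp only [aseq]
      rw [Finset.sum_add_distrib, Finset.mul_sum, Finset.mul_sum]
    have hcount : ∑ j ∈ Fdist G B m, ∑ i ∈ G.neighborFinset j, aseq G B M t i
        ≤ (Δ : ℝ) * ∑ i ∈ Fdist G B (m - 1), aseq G B M t i := by
      have h1 : ∑ j ∈ Fdist G B m, ∑ i ∈ G.neighborFinset j, aseq G B M t i
          = ∑ i : V, ∑ j ∈ Fdist G B m, (if G.Adj j i then aseq G B M t i else 0) := by
        rw [Finset.sum_comm]
        refine Finset.sum_congr rfl fun j _ => ?_
        rw [SimpleGraph.neighborFinset_eq_filter, Finset.sum_filter]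
      rw [h1]
      have h2 : ∀ i : V, (∑ j ∈ Fdist G B m, if G.Adj j i then aseq G B M t i else 0)
          ≤ (if i ∈ Fdist G B (m - 1) then (Δ : ℝ) * aseq G B M t i else 0) := by
        intro i
        by_cases hi : i ∈ Fdist G B (m - 1)
        · rw [if_pos hi]
          calc (∑ j ∈ Fdist G B m, if G.Adj j i then aseq G B M t i else 0)
              ≤ ∑ j : V, (if G.Adj j i then aseq G B M t i else 0) :=
                Finset.sum_le_sum_of_subset_of_nonneg (Finset.subset_univ _)
                  fun j _ _ => by
                    split
                    · exact aseq_nonneg G B hM t i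
                    · exact le_refl 0
            _ = ∑ j ∈ G.neighborFinset i, aseq G B M t i := by
                rw [SimpleGraph.neighborFinset_eq_filter, Finset.sum_filter]
                exact Finset.sum_congr rfl fun j _ => if_congr (G.adj_comm j i) rfl rfl
            _ = (G.degree i : ℝ) * aseq G B M t i := by
                rw [Finset.sum_const, nsmul_eq_mul, SimpleGraph.card_neighborFinset_eq_degree]
            _ ≤ (Δ : ℝ) * aseq G B M t i :=
                mul_le_mul_of_nonneg_right (by exact_mod_cast hdeg i)
                  (aseq_nonneg G B hM t i)
        · rw [if_neg hi]
          refine le_of_eq (Finset.sum_eq_zero fun j hj => ?_)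
          rw [if_neg]
          intro hadj
          cases m with
          | zero => exact hi (mem_Fdist_zero G B i)
          | succ m'' => exact hi (Fdist_adj hj (G.adj_symm hadj))
      calc ∑ i : V, ∑ j ∈ Fdist G B m, (if G.Adj j i then aseq G B M t i else 0)
          ≤ ∑ i : V, (if i ∈ Fdist G B (m - 1) then (Δ : ℝ) * aseq G B M t i else 0) :=
            Finset.sum_le_sum fun i _ => h2 i
        _ = ∑ i ∈ Fdist G B (m - 1), (Δ : ℝ) * aseq G B M t i := by
            rw [Finset.sum_ite_mem, Finset.univ_inter]
        _ = (Δ : ℝ) * ∑ i ∈ Fdist G B (m - 1), aseq G B M t i := by rw [Finset.mul_sum]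
    calc ∑ j ∈ Fdist G B m, aseq G B M (t + 1) j
        ≤ (1 + 1 / (Fintype.card V : ℝ))
            * (M * (B.card : ℝ)
              * Useq (1 + 1 / (Fintype.card V : ℝ)) ((Δ : ℝ) / (Fintype.card V : ℝ)) t m)
          + (1 / (Fintype.card V : ℝ)) * ((Δ : ℝ) * (M * (B.card : ℝ)
              * Useq (1 + 1 / (Fintype.card V : ℝ)) ((Δ : ℝ) / (Fintype.card V : ℝ)) t
                  (m - 1))) := by
          rw [hexp]
          refine add_le_add (mul_le_mul_of_nonneg_left (ih m) ha0) ?_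
          refine mul_le_mul_of_nonneg_left ?_ (by positivity)
          exact hcount.trans (mul_le_mul_of_nonneg_left (ih (m - 1)) (Nat.cast_nonneg _))
      _ = M * (B.card : ℝ)
          * ((1 + 1 / (Fintype.card V : ℝ))
              * Useq (1 + 1 / (Fintype.card V : ℝ)) ((Δ : ℝ) / (Fintype.card V : ℝ)) t m
            + ((Δ : ℝ) / (Fintype.card V : ℝ))
              * Useq (1 + 1 / (Fintype.card V : ℝ)) ((Δ : ℝ) / (Fintype.card V : ℝ)) t
                  (m - 1)) := by ring
      _ ≤ M * (B.card : ℝ)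
          * Useq (1 + 1 / (Fintype.card V : ℝ)) ((Δ : ℝ) / (Fintype.card V : ℝ)) (t + 1) m :=
          mul_le_mul_of_nonneg_left (Useq_rec ha0 hl0 t m)
            (mul_nonneg hM (Nat.cast_nonneg _))

lemma abs_le_supNorm (f : Config V → ℝ) (x : Config V) : |f x| ≤ supNorm f :=
  le_ciSup (Set.Finite.bddAbove (Set.finite_range fun z : Config V => |f z|)) x

lemma supNorm_nonneg (f : Config V → ℝ) : 0 ≤ supNorm f :=
  le_trans (abs_nonneg (f fun _ => true)) (abs_le_supNorm f fun _ => true)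

lemma lexp_sub {A : Finset V} (ν : SubConfig A → ℝ) (φ ψ : Config V → ℝ) :
    lexp ν (fun x => φ x - ψ x) = lexp ν φ - lexp ν ψ := by
  simp [lexp, mul_sub, Finset.sum_sub_distrib]

lemma abs_lexp_le {A : Finset V} {ν : SubConfig A → ℝ} (hd : IsDist ν) {φ : Config V → ℝ}
    {C : ℝ} (hφ : ∀ x, |φ x| ≤ C) : |lexp ν φ| ≤ C := by
  calc |lexp ν φ| ≤ ∑ y : SubConfig A, |ν y * φ (extendC A y)| :=
      Finset.abs_sum_le_sum_abs _ _
    _ ≤ ∑ y : SubConfig A, ν y * C := by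
        refine Finset.sum_le_sum fun y _ => ?_
        rw [abs_mul, abs_of_nonneg (hd.1 y)]
        exact mul_le_mul_of_nonneg_left (hφ _) (hd.1 y)
    _ = C := by rw [← Finset.sum_mul, hd.2, one_mul]

lemma abs_mulVec_le {G : SimpleGraph V} {P : Config V → Config V → ℝ}
    (hP : IsLocalMC G P) {φ : Config V → ℝ} {C : ℝ}
    (hφ : ∀ x, |φ x| ≤ C) (x : Config V) : |(Matrix.of P).mulVec φ x| ≤ C := by
  rw [mulVec_apply]
  calc |∑ x' : Config V, P x x' * φ x'| ≤ ∑ x' : Config V, |P x x' * φ x'| :=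
      Finset.abs_sum_le_sum_abs _ _
    _ ≤ ∑ x' : Config V, P x x' * C := by
        refine Finset.sum_le_sum fun x' _ => ?_
        rw [abs_mul, abs_of_nonneg (hP.nonneg x x')]
        exact mul_le_mul_of_nonneg_left (hφ x') (hP.nonneg x x')
    _ = C := by rw [← Finset.sum_mul, hP.rowSum, one_mul]

/-- Truncation of configurations outside `Λ`. -/
def trunc (Λ : Finset V) (x : Config V) : Config V := fun i => if i ∈ Λ then x i else true

lemma supportedOn_trunc (Λ : Finset V) (g : Config V → ℝ) :
    SupportedOn (fun x => g (trunc Λ x)) ↑Λ := by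
  intro i hi x
  have hiΛ : i ∉ Λ := fun hc => hi (Finset.mem_coe.mpr hc)
  have heq : trunc Λ (flip x i) = trunc Λ x := by
    funext k
    simp only [trunc]
    by_cases hk : k ∈ Λ
    · have hki : k ≠ i := fun h => hiΛ (by rwa [h] at hk)
      rw [if_pos hk, if_pos hk, flip_other x hki]
    · rw [if_neg hk, if_neg hk]
  simp only [heq]

lemma abs_diff_le_sum (g : Config V → ℝ) (A : V → ℝ) (hA0 : ∀ j, 0 ≤ A j)
    (hA : ∀ j z, |grad g j z| ≤ A j) :
    ∀ (S : Finset V) (x y : Config V), (∀ j, x j ≠ y j → j ∈ S) →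
      |g x - g y| ≤ ∑ j ∈ S, A j := by
  intro S
  induction S using Finset.induction_on with
  | empty =>
    intro x y hxy
    have hxyeq : x = y := funext fun j => by
      by_contra hc
      exact absurd (hxy j hc) (Finset.notMem_empty j)
    simp [hxyeq]
  | @insert i S hiS ih =>
    intro x y hxy
    by_cases hxi : x i = y i
    · have h1 : |g x - g y| ≤ ∑ j ∈ S, A j := by
        refine ih x y fun j hj => ?_
        rcases Finset.mem_insert.mp (hxy j hj) with h | h
        · subst h; exact absurd hxi hj
        · exact h
      calc |g x - g y| ≤ ∑ j ∈ S, A j := h1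
        _ ≤ ∑ j ∈ insert i S, A j := by
            rw [Finset.sum_insert hiS]
            linarith [hA0 i]
    · set y' : Config V := flip y i with hy'
      have hxy' : ∀ j, x j ≠ y' j → j ∈ S := by
        intro j hj
        by_cases hji : j = i
        · subst hji
          exfalso
          apply hj
          rw [hy', flip_self_apply]
          cases hxv : x j <;> cases hyv : y j <;> simp_all
        · rw [hy', flip_other y hji] at hj
          rcases Finset.mem_insert.mp (hxy j hj) with h | h
          · exact absurd h hji
          · exact h
      have h1 : |g x - g y'| ≤ ∑ j ∈ S, A j := ih x y' hxy'
      have h2 : |g y' - g y| ≤ A i := hA i y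
      calc |g x - g y| = |(g x - g y') + (g y' - g y)| := by ring_nf
        _ ≤ |g x - g y'| + |g y' - g y| := abs_add_le _ _
        _ ≤ (∑ j ∈ S, A j) + A i := add_le_add h1 h2
        _ = ∑ j ∈ insert i S, A j := by rw [Finset.sum_insert hiS]; ring

end AuxLemmas

/-- **intermediate bound for the Markov-chain LP.** Under the fast-mixing
assumption, for `f` supported on `B ⊆ Λ` with `μ(f) = 0`, `r = dist(B,Λᶜ)` and any
`ν ∈ LP_{Λ,MC}`, every integer `t₁ ≥ 1` gives
`|ν(f)| ≤ 2 t₁ ‖f‖_∞ 8|B| e^{v t₁/n - r} + ‖f‖_∞ c₁ n (1 - c₂/n)^{t₁}`, `v = e²(Δ-1)`. -/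
theorem LPmc_intermediate_bound [Nonempty V] (G : SimpleGraph V) [DecidableRel G.Adj]
    (Δ : ℕ) (hΔ : 1 < Δ) (hdeg : ∀ v : V, G.degree v ≤ Δ)
    (β : ℝ) (hβ : 0 ≤ β) (h : V → V → Bool → Bool → ℝ)
    (hsym : ∀ i j a b, h i j a b = h i j b a) (hsym' : ∀ i j, h i j = h j i)
    (P : Config V → Config V → ℝ) (hP : IsLocalMC G P)
    (hstat : ∀ x' : Config V,
      ∑ x : Config V, gibbs (ham G β h) x * P x x' = gibbs (ham G β h) x')
    (c₁ c₂ : ℝ) (hc₁ : 0 < c₁) (hc₂ : 0 < c₂) (hc₂n : c₂ < (Fintype.card V : ℝ))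
    (hmix : ∀ (t : ℕ) (x : Config V),
      ∑ x' : Config V, |(Matrix.of P ^ t) x x' - gibbs (ham G β h) x'| ≤
        c₁ * (Fintype.card V : ℝ) * (1 - c₂ / (Fintype.card V : ℝ)) ^ t)
    (B Λ : Finset V) (hBΛ : B ⊆ Λ)
    (f : Config V → ℝ) (hf : SupportedOn f ↑B)
    (hmean : ∑ x : Config V, gibbs (ham G β h) x * f x = 0)
    (r : ℕ) (hr : ∀ i ∈ B, ∀ j ∉ Λ, (r : ℕ∞) ≤ G.edist i j)
    (ν : SubConfig (closure G Λ) → ℝ) (hν : ν ∈ LPmc G P Λ)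
    (t₁ : ℕ) (ht₁ : 1 ≤ t₁) :
    |lexp ν f| ≤
      2 * (t₁ : ℝ) * supNorm f * (8 * (B.card : ℝ)) *
          Real.exp (Real.exp 1 ^ 2 * ((Δ : ℝ) - 1) * t₁ / (Fintype.card V : ℝ) - r)
        + supNorm f * (c₁ * (Fintype.card V : ℝ) *
            (1 - c₂ / (Fintype.card V : ℝ)) ^ t₁) := by
  classical
  obtain ⟨hνd, hνP⟩ := hν
  have hn1 : (1 : ℝ) ≤ (Fintype.card V : ℝ) := by
    have : 0 < Fintype.card V := Fintype.card_pos
    exact_mod_cast this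
  have hn0 : (0 : ℝ) < (Fintype.card V : ℝ) := by linarith
  have hsup0 : 0 ≤ supNorm f := supNorm_nonneg f
  set M : ℝ := 2 * supNorm f with hM
  have hM0 : 0 ≤ M := by rw [hM]; linarith
  -- base bound on gradients of f
  have h0 : ∀ j z, |grad f j z| ≤ aseq G B M 0 j := by
    intro j z
    by_cases hj : j ∈ B
    · have : aseq G B M 0 j = M := by simp [aseq, hj]
      rw [this]
      calc |grad f j z| = |f (flip z j) - f z| := rfl
        _ ≤ |f (flip z j)| + |f z| := abs_sub _ _
        _ ≤ supNorm f + supNorm f := add_le_add (abs_le_supNorm f _) (abs_le_supNorm f _)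
        _ = M := by rw [hM]; ring
    · have hfz : f (flip z j) = f z := hf j (fun hc => hj (Finset.mem_coe.mp hc)) z
      have : aseq G B M 0 j = 0 := by simp [aseq, hj]
      rw [this, grad, hfz]
      simp
  set gseq : ℕ → Config V → ℝ := fun t => (Matrix.of P ^ t).mulVec f with hgseq
  have hgrad : ∀ t j z, |grad (gseq t) j z| ≤ aseq G B M t j := grad_pow_le hP B M f h0
  have haseq0 : ∀ t j, 0 ≤ aseq G B M t j := aseq_nonneg G B hM0
  set Eexp : ℝ :=
    Real.exp (Real.exp 1 ^ 2 * ((Δ : ℝ) - 1) * (t₁ : ℝ) / (Fintype.card V : ℝ) - (r : ℝ))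
    with hEexp
  set EB : ℝ := M * (B.card : ℝ) * Eexp with hEB
  have hEB0 : 0 ≤ EB := by
    rw [hEB]
    exact mul_nonneg (mul_nonneg hM0 (Nat.cast_nonneg _)) (Real.exp_pos _).le
  -- truncation error is controlled
  have htrunc : ∀ t, t ≤ t₁ → ∀ z, |gseq t z - gseq t (trunc Λ z)| ≤ EB := by
    intro t htle z
    have hdiffmem : ∀ j, z j ≠ trunc Λ z j → j ∈ Finset.univ \ Λ := by
      intro j hj
      rw [Finset.mem_sdiff]
      refine ⟨Finset.mem_univ j, fun hjΛ => hj ?_⟩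
      simp [trunc, hjΛ]
    have h1 : |gseq t z - gseq t (trunc Λ z)| ≤ ∑ j ∈ Finset.univ \ Λ, aseq G B M t j :=
      abs_diff_le_sum (gseq t) (aseq G B M t) (haseq0 t) (hgrad t)
        (Finset.univ \ Λ) z (trunc Λ z) hdiffmem
    have hsub : Finset.univ \ Λ ⊆ Fdist G B r := by
      intro j hj
      rw [Finset.mem_sdiff] at hj
      rw [mem_Fdist]
      intro i hi
      exact hr i hi j hj.2
    have h2 : ∑ j ∈ Finset.univ \ Λ, aseq G B M t j ≤ ∑ j ∈ Fdist G B r, aseq G B M t j :=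
      Finset.sum_le_sum_of_subset_of_nonneg hsub fun j _ _ => haseq0 t j
    have h3 := sum_aseq_Fdist_le G B hM0 hdeg t r
    have h4 := Useq_le (a := 1 + 1 / (Fintype.card V : ℝ))
      (l := (Δ : ℝ) / (Fintype.card V : ℝ))
      (by
        have hinv : (0 : ℝ) ≤ 1 / (Fintype.card V : ℝ) := by positivity
        linarith)
      (by positivity) t r
    have hΔ2 : (2 : ℝ) ≤ (Δ : ℝ) := by exact_mod_cast hΔ
    have ht' : (t : ℝ) ≤ (t₁ : ℝ) := by exact_mod_cast htle
    have h27 : (2.7182818283 : ℝ) < Real.exp 1 := Real.exp_one_gt_d9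
    have hkey : 1 + Real.exp 1 * (Δ : ℝ) ≤ Real.exp 1 ^ 2 * ((Δ : ℝ) - 1) := by
      nlinarith [h27, hΔ2, sq_nonneg (Real.exp 1 - 2.7182818283)]
    have harg : (t : ℝ) * ((1 + 1 / (Fintype.card V : ℝ)) - 1)
          + Real.exp 1 * ((t : ℝ) * ((Δ : ℝ) / (Fintype.card V : ℝ))) - (r : ℝ)
        ≤ Real.exp 1 ^ 2 * ((Δ : ℝ) - 1) * (t₁ : ℝ) / (Fintype.card V : ℝ) - (r : ℝ) := by
      have e1 : (t : ℝ) * ((1 + 1 / (Fintype.card V : ℝ)) - 1)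
            + Real.exp 1 * ((t : ℝ) * ((Δ : ℝ) / (Fintype.card V : ℝ)))
          = ((t : ℝ) * (1 + Real.exp 1 * (Δ : ℝ))) * ((Fintype.card V : ℝ))⁻¹ := by
        field_simp
        ring
      have e2 : Real.exp 1 ^ 2 * ((Δ : ℝ) - 1) * (t₁ : ℝ) / (Fintype.card V : ℝ)
          = (Real.exp 1 ^ 2 * ((Δ : ℝ) - 1) * (t₁ : ℝ)) * ((Fintype.card V : ℝ))⁻¹ := by
        rw [div_eq_mul_inv]
      rw [e1, e2]
      have hmul : (t : ℝ) * (1 + Real.exp 1 * (Δ : ℝ))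
          ≤ Real.exp 1 ^ 2 * ((Δ : ℝ) - 1) * (t₁ : ℝ) := by
        have htnn : (0 : ℝ) ≤ (t : ℝ) := Nat.cast_nonneg _
        have hpos : (0 : ℝ) ≤ 1 + Real.exp 1 * (Δ : ℝ) := by positivity
        calc (t : ℝ) * (1 + Real.exp 1 * (Δ : ℝ))
            ≤ (t₁ : ℝ) * (1 + Real.exp 1 * (Δ : ℝ)) := mul_le_mul_of_nonneg_right ht' hpos
          _ ≤ (t₁ : ℝ) * (Real.exp 1 ^ 2 * ((Δ : ℝ) - 1)) :=
              mul_le_mul_of_nonneg_left hkey (Nat.cast_nonneg _)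
          _ = Real.exp 1 ^ 2 * ((Δ : ℝ) - 1) * (t₁ : ℝ) := by ring
      have := mul_le_mul_of_nonneg_right hmul (by positivity :
        (0 : ℝ) ≤ ((Fintype.card V : ℝ))⁻¹)
      linarith
    calc |gseq t z - gseq t (trunc Λ z)|
        ≤ ∑ j ∈ Finset.univ \ Λ, aseq G B M t j := h1
      _ ≤ ∑ j ∈ Fdist G B r, aseq G B M t j := h2
      _ ≤ M * (B.card : ℝ) * Useq (1 + 1 / (Fintype.card V : ℝ))
            ((Δ : ℝ) / (Fintype.card V : ℝ)) t r := h3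
      _ ≤ M * (B.card : ℝ) * Real.exp ((t : ℝ) * ((1 + 1 / (Fintype.card V : ℝ)) - 1)
            + Real.exp 1 * ((t : ℝ) * ((Δ : ℝ) / (Fintype.card V : ℝ))) - (r : ℝ)) :=
          mul_le_mul_of_nonneg_left h4 (mul_nonneg hM0 (Nat.cast_nonneg _))
      _ ≤ EB := by
          rw [hEB, hEexp]
          exact mul_le_mul_of_nonneg_left (Real.exp_le_exp.mpr harg)
            (mul_nonneg hM0 (Nat.cast_nonneg _))
  -- one-step stationarity error
  have hstep : ∀ t, t < t₁ →
      |lexp ν (gseq t) - lexp ν (gseq (t + 1))| ≤ 2 * EB := by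
    intro t htlt
    set htr : Config V → ℝ := fun z => gseq t (trunc Λ z) with hhtr
    set dfun : Config V → ℝ := fun z => gseq t z - htr z with hdfun
    have hsupp : SupportedOn htr ↑Λ := supportedOn_trunc Λ (gseq t)
    have hstat' : lexp ν ((Matrix.of P).mulVec htr) = lexp ν htr := hνP htr hsupp
    have e0 : gseq (t + 1) = (Matrix.of P).mulVec (gseq t) := by
      rw [hgseq]
      simp only
      rw [pow_succ', Matrix.mulVec_mulVec]
    have e1 : lexp ν dfun = lexp ν (gseq t) - lexp ν htr := lexp_sub ν (gseq t) htr
    have e2 : (Matrix.of P).mulVec dfun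
        = fun z => (Matrix.of P).mulVec (gseq t) z - (Matrix.of P).mulVec htr z := by
      have : dfun = gseq t - htr := rfl
      rw [this, Matrix.mulVec_sub]
      rfl
    have e3 : lexp ν ((Matrix.of P).mulVec dfun)
        = lexp ν ((Matrix.of P).mulVec (gseq t)) - lexp ν ((Matrix.of P).mulVec htr) := by
      rw [e2]
      exact lexp_sub ν _ _
    have e4 : lexp ν (gseq t) - lexp ν (gseq (t + 1))
        = lexp ν dfun - lexp ν ((Matrix.of P).mulVec dfun) := by
      rw [e0, e1, e3, hstat']
      ring
    rw [e4]
    have b1 : |lexp ν dfun| ≤ EB := abs_lexp_le hνd (htrunc t (le_of_lt htlt))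
    have b2 : |lexp ν ((Matrix.of P).mulVec dfun)| ≤ EB :=
      abs_lexp_le hνd fun x => abs_mulVec_le hP (htrunc t (le_of_lt htlt)) x
    calc |lexp ν dfun - lexp ν ((Matrix.of P).mulVec dfun)|
        ≤ |lexp ν dfun| + |lexp ν ((Matrix.of P).mulVec dfun)| := abs_sub _ _
      _ ≤ EB + EB := add_le_add b1 b2
      _ = 2 * EB := by ring
  -- telescoping
  have hg0 : gseq 0 = f := by
    rw [hgseq]
    simp only [pow_zero]
    exact Matrix.one_mulVec f
  have htel : lexp ν f - lexp ν (gseq t₁)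
      = ∑ t ∈ Finset.range t₁, (lexp ν (gseq t) - lexp ν (gseq (t + 1))) := by
    rw [Finset.sum_range_sub' fun t => lexp ν (gseq t), hg0]
  -- mixing bound for the endpoint
  have hmixp : ∀ z, |gseq t₁ z|
      ≤ supNorm f * (c₁ * (Fintype.card V : ℝ) * (1 - c₂ / (Fintype.card V : ℝ)) ^ t₁) := by
    intro z
    have e : gseq t₁ z
        = ∑ x' : Config V, ((Matrix.of P ^ t₁) z x' - gibbs (ham G β h) x') * f x' := by
      have h1 : gseq t₁ z = ∑ x' : Config V, (Matrix.of P ^ t₁) z x' * f x' := rfl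
      have h2 : ∑ x' : Config V, ((Matrix.of P ^ t₁) z x' - gibbs (ham G β h) x') * f x'
          = (∑ x' : Config V, (Matrix.of P ^ t₁) z x' * f x')
            - ∑ x' : Config V, gibbs (ham G β h) x' * f x' := by
        rw [← Finset.sum_sub_distrib]
        exact Finset.sum_congr rfl fun x' _ => by ring
      rw [h1, h2, hmean, sub_zero]
    rw [e]
    calc |∑ x' : Config V, ((Matrix.of P ^ t₁) z x' - gibbs (ham G β h) x') * f x'|
        ≤ ∑ x' : Config V, |((Matrix.of P ^ t₁) z x' - gibbs (ham G β h) x') * f x'| :=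
          Finset.abs_sum_le_sum_abs _ _
      _ ≤ ∑ x' : Config V, |(Matrix.of P ^ t₁) z x' - gibbs (ham G β h) x'| * supNorm f := by
          refine Finset.sum_le_sum fun x' _ => ?_
          rw [abs_mul]
          exact mul_le_mul_of_nonneg_left (abs_le_supNorm f x') (abs_nonneg _)
      _ = (∑ x' : Config V, |(Matrix.of P ^ t₁) z x' - gibbs (ham G β h) x'|) * supNorm f :=
          (Finset.sum_mul _ _ _).symm
      _ ≤ (c₁ * (Fintype.card V : ℝ) * (1 - c₂ / (Fintype.card V : ℝ)) ^ t₁) * supNorm f :=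
          mul_le_mul_of_nonneg_right (hmix t₁ z) hsup0
      _ = supNorm f * (c₁ * (Fintype.card V : ℝ) * (1 - c₂ / (Fintype.card V : ℝ)) ^ t₁) :=
          mul_comm _ _
  -- put everything together
  have final1 : |lexp ν f| ≤ (t₁ : ℝ) * (2 * EB)
      + supNorm f * (c₁ * (Fintype.card V : ℝ) * (1 - c₂ / (Fintype.card V : ℝ)) ^ t₁) := by
    have hsplit : lexp ν f
        = (∑ t ∈ Finset.range t₁, (lexp ν (gseq t) - lexp ν (gseq (t + 1))))
          + lexp ν (gseq t₁) := by
      rw [← htel]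
      ring
    rw [hsplit]
    calc |(∑ t ∈ Finset.range t₁, (lexp ν (gseq t) - lexp ν (gseq (t + 1))))
          + lexp ν (gseq t₁)|
        ≤ |∑ t ∈ Finset.range t₁, (lexp ν (gseq t) - lexp ν (gseq (t + 1)))|
          + |lexp ν (gseq t₁)| := abs_add_le _ _
      _ ≤ (∑ t ∈ Finset.range t₁, |lexp ν (gseq t) - lexp ν (gseq (t + 1))|)
          + |lexp ν (gseq t₁)| := by
          exact add_le_add_left (Finset.abs_sum_le_sum_abs _ _) _
      _ ≤ (∑ _t ∈ Finset.range t₁, 2 * EB)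
          + supNorm f * (c₁ * (Fintype.card V : ℝ)
              * (1 - c₂ / (Fintype.card V : ℝ)) ^ t₁) := by
          refine add_le_add ?_ (abs_lexp_le hνd hmixp)
          exact Finset.sum_le_sum fun t ht => hstep t (Finset.mem_range.mp ht)
      _ = (t₁ : ℝ) * (2 * EB)
          + supNorm f * (c₁ * (Fintype.card V : ℝ)
              * (1 - c₂ / (Fintype.card V : ℝ)) ^ t₁) := by
          rw [Finset.sum_const, Finset.card_range, nsmul_eq_mul]
  refine final1.trans (add_le_add_left ?_ _)
  have hq : 0 ≤ (t₁ : ℝ) * (supNorm f * ((B.card : ℝ) * Eexp)) := by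
    have hE : (0 : ℝ) ≤ Eexp := by rw [hEexp]; exact (Real.exp_pos _).le
    exact mul_nonneg (Nat.cast_nonneg _)
      (mul_nonneg hsup0 (mul_nonneg (Nat.cast_nonneg _) hE))
  have e5 : (t₁ : ℝ) * (2 * EB) = 4 * ((t₁ : ℝ) * (supNorm f * ((B.card : ℝ) * Eexp))) := by
    rw [hEB, hM]
    ring
  have e6 : 2 * (t₁ : ℝ) * supNorm f * (8 * (B.card : ℝ)) * Eexp
      = 16 * ((t₁ : ℝ) * (supNorm f * ((B.card : ℝ) * Eexp))) := by ring
  rw [e5, e6]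
  linarith [hq]

end GibbsLP
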